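/- Suppose that for some λ > 0 and C > 0 the defective Poincaré inequality π(F²) ≤ (1/λ)·E(F,F) + C·π(F)² holds for all F in the domain, where E is the second quantization of a base Dirichlet form E₀ with respect to Poisson measure π with intensity μ. Then μ(f²) ≤ (1/λ)·E₀(f,f) + (C−1)·μ(|f|)² for all f in the domain of E₀. -/
import Mathlib


open MeasureTheory Real

/-- A defective Poincaré inequality for the second quantization form `𝔈` on the
Poisson space implies the corresponding defective Poincaré inequality for the base
form `E₀` on `L²(μ)`. The second quantization structure is encoded via its action
on the linear functionals `F γ = γ(|f|)`. -/
theorem stmt_15 {E : Type*} [MeasurableSpace E] (μ : Measure E) [SigmaFinite μ]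
    (pm : Measure (Measure E)) [IsProbabilityMeasure pm]
    (lam C : ℝ) (hlam : 0 < lam) (hC : 0 < C)
    (𝔈 : (Measure E → ℝ) → ℝ) (Dom : Set (Measure E → ℝ))
    (E₀ : (E → ℝ) → ℝ) (Dom₀ : Set (E → ℝ))
    -- for f in the base domain, F(γ) = γ(|f|) belongs to the domain of 𝔈
    (hmem : ∀ f ∈ Dom₀, (fun γ : Measure E => ∫ x, |f x| ∂γ) ∈ Dom)
    -- 𝔈(F,F) = E₀(|f|,|f|) ≤ E₀(f,f)
    (hform : ∀ f ∈ Dom₀, 𝔈 (fun γ : Measure E => ∫ x, |f x| ∂γ) ≤ E₀ f)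
    -- second moment formula for Poisson linear functionals
    (hmom2 : ∀ f ∈ Dom₀,
      ∫ γ, (∫ x, |f x| ∂γ) ^ 2 ∂pm = ∫ x, f x ^ 2 ∂μ + (∫ x, |f x| ∂μ) ^ 2)
    -- first moment formula
    (hmom1 : ∀ f ∈ Dom₀, ∫ γ, (∫ x, |f x| ∂γ) ∂pm = ∫ x, |f x| ∂μ)
    -- the defective Poincaré inequality on Poisson space
    (hPoin : ∀ F ∈ Dom,
      ∫ γ, F γ ^ 2 ∂pm ≤ (1 / lam) * 𝔈 F + C * (∫ γ, F γ ∂pm) ^ 2) :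
    ∀ f ∈ Dom₀,
      ∫ x, f x ^ 2 ∂μ ≤ (1 / lam) * E₀ f + (C - 1) * (∫ x, |f x| ∂μ) ^ 2 := by
  intro f hf
  have h := hPoin _ (hmem f hf)
  rw [hmom2 f hf, hmom1 f hf] at h
  have h2 := hform f hf
  have h3 := mul_le_mul_of_nonneg_left h2 (le_of_lt (by positivity : (0:ℝ) < 1 / lam))
  linarith
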